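/- Let α ≥ 0 be a real number. Let (a_n)_{n≥0} be the real sequence defined by a_0 = 1 and a_n = (2n − 1) a_{n−1} + α ∑_{i=0}^{n−1} a_i a_{n−1−i} for n ≥ 1. Let (b_n)_{n≥0} be the real sequence determined by b_0 = 1 and the relations a_n = (α + 1) ∑_{i=0}^{n−1} b_i a_{n−1−i} for n ≥ 1. Then (b_n) satisfies b_0 = 1 and b_n = (2n − 1) b_{n−1} + (α + 1) ∑_{i=0}^{n−1} b_i b_{n−1−i} for all n ≥ 1. -/

import Mathlib

open PowerSeries Finset

lemma coeff_mk_mul_aux (f g : ℕ → ℝ) (n : ℕ) :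
    PowerSeries.coeff n (PowerSeries.mk f * PowerSeries.mk g)
      = ∑ i ∈ Finset.range (n + 1), f i * g (n - i) := by
  rw [PowerSeries.coeff_mul, Finset.Nat.sum_antidiagonal_eq_sum_range_succ_mk]
  simp

lemma coeff_succ_rec_aux (β : ℝ) (f : ℕ → ℝ) (m : ℕ) :
    PowerSeries.coeff (m + 1)
      (1 + X * PowerSeries.mk f + 2 * X ^ 2 * (d⁄dX ℝ (PowerSeries.mk f))
        + PowerSeries.C β * (X * (PowerSeries.mk f * PowerSeries.mk f)))
    = (2 * ((m : ℝ) + 1) - 1) * f m + β * ∑ i ∈ Finset.range (m + 1), f i * f (m - i) := by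
  simp only [map_add, PowerSeries.coeff_one, Nat.succ_ne_zero, if_false,
    PowerSeries.coeff_succ_X_mul, PowerSeries.coeff_mk, PowerSeries.coeff_C_mul,
    coeff_mk_mul_aux, zero_add]
  have h2 : PowerSeries.coeff (m + 1) (2 * X ^ 2 * (d⁄dX ℝ (PowerSeries.mk f)))
      = 2 * ((m : ℝ)) * f m := by
    rw [mul_assoc, (map_ofNat (PowerSeries.C (R := ℝ)) 2).symm, PowerSeries.coeff_C_mul]
    rcases m with _ | k
    · rw [PowerSeries.coeff_X_pow_mul']; norm_num
    · rw [show k + 1 + 1 = k + 2 by ring, PowerSeries.coeff_X_pow_mul,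
        PowerSeries.coeff_derivative, PowerSeries.coeff_mk]
      push_cast; ring
  rw [h2]; ring

lemma series_iff_aux (β : ℝ) (f : ℕ → ℝ) (hf0 : f 0 = 1) :
    PowerSeries.mk f = 1 + X * PowerSeries.mk f + 2 * X ^ 2 * (d⁄dX ℝ (PowerSeries.mk f))
        + PowerSeries.C β * (X * (PowerSeries.mk f * PowerSeries.mk f)) ↔
    ∀ m : ℕ, f (m + 1) = (2 * ((m : ℝ) + 1) - 1) * f m
        + β * ∑ i ∈ Finset.range (m + 1), f i * f (m - i) := by
  constructor
  · intro h m
    have := congrArg (PowerSeries.coeff (m + 1)) h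
    rwa [PowerSeries.coeff_mk, coeff_succ_rec_aux] at this
  · intro h
    ext n
    rcases n with _ | m
    · simp [hf0, PowerSeries.coeff_zero_eq_constantCoeff]
    · rw [PowerSeries.coeff_mk, coeff_succ_rec_aux, h m]

theorem b_satisfies_analogous_recurrence (α : ℝ) (hα : 0 ≤ α) (a b : ℕ → ℝ)
    (ha0 : a 0 = 1)
    (ha : ∀ n : ℕ, 1 ≤ n →
      a n = (2 * (n : ℝ) - 1) * a (n - 1) + α * ∑ i ∈ Finset.range n, a i * a (n - 1 - i))
    (hb0 : b 0 = 1)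
    (hab : ∀ n : ℕ, 1 ≤ n →
      a n = (α + 1) * ∑ i ∈ Finset.range n, b i * a (n - 1 - i)) :
    b 0 = 1 ∧ ∀ n : ℕ, 1 ≤ n →
      b n = (2 * (n : ℝ) - 1) * b (n - 1)
        + (α + 1) * ∑ i ∈ Finset.range n, b i * b (n - 1 - i) := by
  refine ⟨hb0, ?_⟩
  set A : ℝ⟦X⟧ := PowerSeries.mk a with hAdef
  set B : ℝ⟦X⟧ := PowerSeries.mk b with hBdef
  set c : ℝ⟦X⟧ := PowerSeries.C (α + 1) with hcdef
  -- the power-series recurrence for a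
  have hA : A = 1 + X * A + 2 * X ^ 2 * (d⁄dX ℝ A) + PowerSeries.C α * (X * (A * A)) := by
    rw [hAdef, series_iff_aux α a ha0]
    intro m
    have := ha (m + 1) (by omega)
    simp only [Nat.add_sub_cancel] at this
    push_cast at this
    convert this using 2
  -- the convolution relation between a and b
  have hAB : A * (1 - c * (X * B)) = 1 := by
    have h1 : A = 1 + c * (X * (B * A)) := by
      ext n
      rcases n with _ | m
      · simp [hAdef, ha0, PowerSeries.coeff_zero_eq_constantCoeff]
      · rw [hAdef, hBdef, PowerSeries.coeff_mk, map_add, PowerSeries.coeff_one, hcdef,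
          PowerSeries.coeff_C_mul, PowerSeries.coeff_succ_X_mul, coeff_mk_mul_aux]
        have := hab (m + 1) (by omega)
        simp only [Nat.add_sub_cancel] at this
        simp only [Nat.succ_ne_zero, if_false, zero_add]
        rw [this]
    linear_combination h1
  set dA : ℝ⟦X⟧ := d⁄dX ℝ A with hdAdef
  set dB : ℝ⟦X⟧ := d⁄dX ℝ B with hdBdef
  have hdc : d⁄dX ℝ c = 0 := by rw [hcdef]; exact PowerSeries.derivative_C
  -- differentiate hAB
  have hd : dA * (1 - c * (X * B)) = A * (c * (B + X * dB)) := by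
    have h0 := congrArg (d⁄dX ℝ) hAB
    rw [Derivation.leibniz, Derivation.map_one_eq_zero, map_sub, Derivation.map_one_eq_zero,
      Derivation.leibniz, Derivation.leibniz, PowerSeries.derivative_X, hdc, ← hdBdef,
      ← hdAdef] at h0
    simp only [smul_eq_mul] at h0
    linear_combination h0
  -- the key identity, multiplied by c * X
  have key : (c * X) * B
      = (c * X) * (1 + X * B + 2 * X ^ 2 * dB + c * (X * (B * B))) := by
    have hc1 : c = PowerSeries.C α + 1 := by rw [hcdef, map_add, map_one]
    have key1 : (1 - c * (X * B)) = (1 - c * (X * B)) * (1 - c * (X * B))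
        + X * (1 - c * (X * B)) + 2 * X ^ 2 * (c * (B + X * dB))
        + PowerSeries.C α * X := by
      linear_combination ((1 - c * (X * B)) * (1 - c * (X * B))) * hA
        + ((-(1 - X)) * (1 - c * (X * B)) + 2 * X ^ 2 * c * (B + X * dB)
            + PowerSeries.C α * X * (A * (1 - c * (X * B)) + 1)) * hAB
        + (2 * X ^ 2 * (1 - c * (X * B))) * hd
    linear_combination key1 - X * hc1
  have hcx : (c * X : ℝ⟦X⟧) ≠ 0 := by
    apply mul_ne_zero _ PowerSeries.X_ne_zero
    rw [hcdef]
    intro h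
    have h2 := congrArg (PowerSeries.constantCoeff (R := ℝ)) h
    simp at h2
    linarith
  have hB : B = 1 + X * B + 2 * X ^ 2 * (d⁄dX ℝ B)
      + PowerSeries.C (α + 1) * (X * (B * B)) := by
    rw [← hcdef, ← hdBdef]
    exact mul_left_cancel₀ hcx key
  have hrec := (series_iff_aux (α + 1) b hb0).mp (by rw [hBdef] at hB; exact hB)
  intro n hn
  obtain ⟨m, rfl⟩ : ∃ m, n = m + 1 := ⟨n - 1, by omega⟩
  have := hrec m
  simp only [Nat.add_sub_cancel]
  push_cast
  convert this using 2
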